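/- (Shifting the interval for the quasi-formal Newton integral) Let x : ℕ → ℝ be the coefficients of a convergent formal power series and let u, v, t be real numbers. For each n define y_n = ∑_{m=n}^∞ C(m,n) x_m t^{m−n} (the series converges absolutely). Then ∑_{n=0}^∞ y_n (v^{n+1} − u^{n+1})/(n+1) = ∑_{n=0}^∞ x_n ((v+t)^{n+1} − (u+t)^{n+1})/(n+1), with all series converging absolutely. -/

import Mathlib

open Filter Topology

private lemma growth_aux (x : ℕ → ℝ)
    (hx : ∀ c : ℝ, 0 < c → Tendsto (fun n => x n * c ^ n) atTop (𝓝 0))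
    {c : ℝ} (hc : 0 < c) : Summable fun k : ℕ => ((k : ℝ) + 1) * |x k| * c ^ k := by
  have h2 := (hx (2 * c) (by positivity)).abs
  rw [abs_zero] at h2
  obtain ⟨B, hB⟩ := h2.bddAbove_range
  have hs : Summable fun k : ℕ => B * (((k : ℝ) + 1) * (1 / 2 : ℝ) ^ k) := by
    refine Summable.mul_left B ?_
    have h1 : Summable fun k : ℕ => (k : ℝ) * (1 / 2 : ℝ) ^ k := by
      simpa using summable_pow_mul_geometric_of_norm_lt_one (R := ℝ) 1
        (r := (1/2 : ℝ)) (by rw [Real.norm_eq_abs, abs_of_nonneg (by norm_num : (0:ℝ) ≤ 1/2)]; norm_num)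
    have h0 : Summable fun k : ℕ => (1 / 2 : ℝ) ^ k :=
      summable_geometric_of_lt_one (by norm_num) (by norm_num)
    simpa [add_mul] using h1.add h0
  refine Summable.of_nonneg_of_le (fun k => by positivity) (fun k => ?_) hs
  have h1 : |x k * (2 * c) ^ k| ≤ B := hB ⟨k, rfl⟩
  have h3 : |x k| * c ^ k = |x k * (2 * c) ^ k| * (1 / 2) ^ k := by
    rw [abs_mul, abs_pow, abs_of_pos (by positivity : (0 : ℝ) < 2 * c), mul_pow, div_pow,
      one_pow]
    have h2k : ((2 : ℝ) ^ k) ≠ 0 := by positivity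
    field_simp
  have hk : (0 : ℝ) ≤ (k : ℝ) + 1 := by positivity
  have hp : (0 : ℝ) ≤ (1 / 2 : ℝ) ^ k := by positivity
  calc ((k : ℝ) + 1) * |x k| * c ^ k = ((k : ℝ) + 1) * (|x k| * c ^ k) := by ring
    _ = ((k : ℝ) + 1) * (|x k * (2 * c) ^ k| * (1 / 2) ^ k) := by rw [h3]
    _ ≤ ((k : ℝ) + 1) * (B * (1 / 2) ^ k) := by
        apply mul_le_mul_of_nonneg_left _ hk
        exact mul_le_mul_of_nonneg_right h1 hp
    _ = B * (((k : ℝ) + 1) * (1 / 2 : ℝ) ^ k) := by ring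

private lemma binom_bound (a b : ℝ) (ha : 0 ≤ a) (hb : 0 ≤ b) (k n : ℕ) (hn : n ≤ k) :
    (k.choose n : ℝ) * a ^ n * b ^ (k - n) ≤ (a + b) ^ k := by
  calc (k.choose n : ℝ) * a ^ n * b ^ (k - n) = a ^ n * b ^ (k - n) * (k.choose n : ℝ) := by ring
    _ ≤ ∑ j ∈ Finset.range (k + 1), a ^ j * b ^ (k - j) * (k.choose j : ℝ) :=
        Finset.single_le_sum (f := fun j => a ^ j * b ^ (k - j) * (k.choose j : ℝ))
          (fun i _ => by positivity)
          (Finset.mem_range.mpr (Nat.lt_succ_of_le hn))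
    _ = (a + b) ^ k := (add_pow a b k).symm

private lemma pow_sub_abs_bound (a b : ℝ) (n : ℕ) :
    |a ^ (n + 1) - b ^ (n + 1)| / ((n : ℝ) + 1)
      ≤ 2 * (max |a| |b| + 1) * (max |a| |b| + 1) ^ n := by
  set M : ℝ := max |a| |b| with hM
  have hM0 : 0 ≤ M := le_trans (abs_nonneg a) (le_max_left _ _)
  have ha : |a| ≤ M + 1 := (le_max_left |a| |b|).trans (by linarith)
  have hb : |b| ≤ M + 1 := (le_max_right |a| |b|).trans (by linarith)
  have h1 : |a ^ (n + 1) - b ^ (n + 1)| ≤ 2 * (M + 1) * (M + 1) ^ n := by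
    calc |a ^ (n + 1) - b ^ (n + 1)| ≤ |a ^ (n + 1)| + |b ^ (n + 1)| := abs_sub _ _
      _ = |a| ^ (n + 1) + |b| ^ (n + 1) := by rw [abs_pow, abs_pow]
      _ ≤ (M + 1) ^ (n + 1) + (M + 1) ^ (n + 1) := by
          have h2 := pow_le_pow_left₀ (abs_nonneg a) ha (n + 1)
          have h3 := pow_le_pow_left₀ (abs_nonneg b) hb (n + 1)
          linarith
      _ = 2 * (M + 1) * (M + 1) ^ n := by ring
  calc |a ^ (n + 1) - b ^ (n + 1)| / ((n : ℝ) + 1) ≤ |a ^ (n + 1) - b ^ (n + 1)| := by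
        apply div_le_self (abs_nonneg _)
        have : (0 : ℝ) ≤ (n : ℝ) := Nat.cast_nonneg n
        linarith
    _ ≤ 2 * (M + 1) * (M + 1) ^ n := h1

private lemma rangeA (t w : ℝ) (k : ℕ) :
    ∑ n ∈ Finset.range (k + 1), (k.choose n : ℝ) * t ^ (k - n) * w ^ (n + 1) / ((n : ℝ) + 1)
      = ((w + t) ^ (k + 1) - t ^ (k + 1)) / ((k : ℝ) + 1) := by
  have hk : ((k : ℝ) + 1) ≠ 0 := by positivity
  rw [eq_div_iff hk]
  have expand : (w + t) ^ (k + 1)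
      = ∑ j ∈ Finset.range (k + 2), w ^ j * t ^ (k + 1 - j) * ((k + 1).choose j : ℝ) :=
    add_pow w t (k + 1)
  have peel : (w + t) ^ (k + 1)
      = (∑ n ∈ Finset.range (k + 1), w ^ (n + 1) * t ^ (k - n) * ((k + 1).choose (n + 1) : ℝ))
        + t ^ (k + 1) := by
    rw [expand, Finset.sum_range_succ']
    simp [Nat.succ_sub_succ]
  rw [peel]
  rw [Finset.sum_mul]
  have : ∀ n ∈ Finset.range (k + 1),
      (k.choose n : ℝ) * t ^ (k - n) * w ^ (n + 1) / ((n : ℝ) + 1) * ((k : ℝ) + 1)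
        = w ^ (n + 1) * t ^ (k - n) * ((k + 1).choose (n + 1) : ℝ) := by
    intro n hn
    have hn' : n ≤ k := Nat.lt_succ_iff.mp (Finset.mem_range.mp hn)
    have hcast : ((k : ℝ) + 1) * (k.choose n : ℝ) = ((k + 1).choose (n + 1) : ℝ) * ((n : ℝ) + 1) := by
      have := Nat.add_one_mul_choose_eq k n
      have := congrArg (fun m : ℕ => (m : ℝ)) this
      push_cast at this
      linarith [this]
    have hn0 : ((n : ℝ) + 1) ≠ 0 := by positivity
    field_simp
    linear_combination (t ^ (k - n) * w ^ (n + 1)) * hcast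
  rw [Finset.sum_congr rfl this]
  ring

private lemma antidiag_sum (x : ℕ → ℝ) (u v t : ℝ) (k : ℕ) :
    (∑ p ∈ Finset.HasAntidiagonal.antidiagonal k, ((p.1 + p.2).choose p.1 : ℝ) * x (p.1 + p.2) * t ^ p.2 *
      ((v ^ (p.1 + 1) - u ^ (p.1 + 1)) / ((p.1 : ℝ) + 1)))
      = x k * ((v + t) ^ (k + 1) - (u + t) ^ (k + 1)) / ((k : ℝ) + 1) := by
  rw [Finset.Nat.sum_antidiagonal_eq_sum_range_succ_mk]
  have h1 : ∀ n ∈ Finset.range (k + 1),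
      (((n + (k - n)).choose n : ℝ) * x (n + (k - n)) * t ^ (k - n) *
        ((v ^ (n + 1) - u ^ (n + 1)) / ((n : ℝ) + 1)))
        = x k * ((k.choose n : ℝ) * t ^ (k - n) * v ^ (n + 1) / ((n : ℝ) + 1))
          - x k * ((k.choose n : ℝ) * t ^ (k - n) * u ^ (n + 1) / ((n : ℝ) + 1)) := by
    intro n hn
    have hnk : n + (k - n) = k :=
      Nat.add_sub_cancel' (Nat.lt_succ_iff.mp (Finset.mem_range.mp hn))
    rw [hnk]
    ring
  rw [Finset.sum_congr rfl h1, Finset.sum_sub_distrib, ← Finset.mul_sum, ← Finset.mul_sum,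
    rangeA t v k, rangeA t u k]
  have hk : ((k : ℝ) + 1) ≠ 0 := by positivity
  field_simp
  ring

set_option maxHeartbeats 1000000 in
theorem newton_integral_shift (x : ℕ → ℝ)
    (hx : ∀ c : ℝ, 0 < c → Tendsto (fun n => x n * c ^ n) atTop (𝓝 0))
    (u v t : ℝ) (y : ℕ → ℝ)
    (hy : ∀ n : ℕ, y n = ∑' m : ℕ, (((n + m).choose n : ℝ) * x (n + m) * t ^ m)) :
    (∀ n : ℕ, Summable fun m : ℕ => |((n + m).choose n : ℝ) * x (n + m) * t ^ m|) ∧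
    (Summable fun n : ℕ => |y n * (v ^ (n + 1) - u ^ (n + 1)) / ((n : ℝ) + 1)|) ∧
    (Summable fun n : ℕ =>
      |x n * ((v + t) ^ (n + 1) - (u + t) ^ (n + 1)) / ((n : ℝ) + 1)|) ∧
    (∑' n : ℕ, y n * (v ^ (n + 1) - u ^ (n + 1)) / ((n : ℝ) + 1)) =
      ∑' n : ℕ, x n * ((v + t) ^ (n + 1) - (u + t) ^ (n + 1)) / ((n : ℝ) + 1) := by
  -- basic summability of |x k| * c^k
  have hxsum : ∀ c : ℝ, 0 < c → Summable fun k : ℕ => |x k| * c ^ k := by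
    intro c hc
    refine Summable.of_nonneg_of_le (fun k => by positivity) (fun k => ?_) (growth_aux x hx hc)
    have h1 : (1 : ℝ) ≤ (k : ℝ) + 1 := by
      have : (0 : ℝ) ≤ (k : ℝ) := Nat.cast_nonneg k
      linarith
    have h2 : (0 : ℝ) ≤ |x k| * c ^ k := by positivity
    calc |x k| * c ^ k = 1 * (|x k| * c ^ k) := by ring
      _ ≤ ((k : ℝ) + 1) * (|x k| * c ^ k) := mul_le_mul_of_nonneg_right h1 h2
      _ = ((k : ℝ) + 1) * |x k| * c ^ k := by ring
  -- Part 1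
  have p1 : ∀ n : ℕ, Summable fun m : ℕ => |((n + m).choose n : ℝ) * x (n + m) * t ^ m| := by
    intro n
    have hcomp : Summable fun m : ℕ => |x (n + m)| * (1 + |t|) ^ (n + m) := by
      have := (hxsum (1 + |t|) (by positivity)).comp_injective
        (add_right_injective n)
      exact this
    refine Summable.of_nonneg_of_le (fun m => abs_nonneg _) (fun m => ?_) hcomp
    have hb : ((n + m).choose n : ℝ) * 1 ^ n * |t| ^ m ≤ (1 + |t|) ^ (n + m) := by
      have := binom_bound 1 |t| (by norm_num) (abs_nonneg t) (n + m) n (Nat.le_add_right n m)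
      simpa using this
    have : |((n + m).choose n : ℝ) * x (n + m) * t ^ m|
        = ((n + m).choose n : ℝ) * |t| ^ m * |x (n + m)| := by
      rw [abs_mul, abs_mul, abs_pow, Nat.abs_cast]
      ring
    rw [this]
    have hb' : ((n + m).choose n : ℝ) * |t| ^ m ≤ (1 + |t|) ^ (n + m) := by
      simpa using hb
    calc ((n + m).choose n : ℝ) * |t| ^ m * |x (n + m)|
        ≤ (1 + |t|) ^ (n + m) * |x (n + m)| :=
          mul_le_mul_of_nonneg_right hb' (abs_nonneg _)
      _ = |x (n + m)| * (1 + |t|) ^ (n + m) := by ring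
  -- set up the double-indexed family
  set M : ℝ := max |u| |v| with hMdef
  have hM0 : (0 : ℝ) ≤ M := le_trans (abs_nonneg u) (le_max_left _ _)
  set c : ℝ := (M + 1) + |t| with hcdef
  have hc0 : (0 : ℝ) < c := by positivity
  set F : ℕ × ℕ → ℝ := fun p => ((p.1 + p.2).choose p.1 : ℝ) * x (p.1 + p.2) * t ^ p.2 *
    ((v ^ (p.1 + 1) - u ^ (p.1 + 1)) / ((p.1 : ℝ) + 1)) with hFdef
  have boundF : ∀ n m : ℕ, |F (n, m)| ≤ 2 * (M + 1) * |x (n + m)| * c ^ (n + m) := by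
    intro n m
    have habs : |F (n, m)| = ((n + m).choose n : ℝ) * |x (n + m)| * |t| ^ m *
        (|v ^ (n + 1) - u ^ (n + 1)| / ((n : ℝ) + 1)) := by
      have hn1 : (0 : ℝ) < (n : ℝ) + 1 := by positivity
      rw [hFdef]
      simp only [abs_mul, abs_div, abs_pow, Nat.abs_cast, abs_of_pos hn1]
    have h1 : |v ^ (n + 1) - u ^ (n + 1)| / ((n : ℝ) + 1) ≤ 2 * (M + 1) * (M + 1) ^ n := by
      have := pow_sub_abs_bound v u n
      simpa [hMdef, max_comm |v| |u|] using this
    have h2 : ((n + m).choose n : ℝ) * (M + 1) ^ n * |t| ^ m ≤ c ^ (n + m) := by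
      have := binom_bound (M + 1) |t| (by positivity) (abs_nonneg t) (n + m) n
        (Nat.le_add_right n m)
      simpa [hcdef] using this
    rw [habs]
    calc ((n + m).choose n : ℝ) * |x (n + m)| * |t| ^ m *
          (|v ^ (n + 1) - u ^ (n + 1)| / ((n : ℝ) + 1))
        ≤ ((n + m).choose n : ℝ) * |x (n + m)| * |t| ^ m * (2 * (M + 1) * (M + 1) ^ n) := by
          apply mul_le_mul_of_nonneg_left h1 (by positivity)
      _ = 2 * (M + 1) * |x (n + m)| * (((n + m).choose n : ℝ) * (M + 1) ^ n * |t| ^ m) := by ring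
      _ ≤ 2 * (M + 1) * |x (n + m)| * c ^ (n + m) := by
          apply mul_le_mul_of_nonneg_left h2 (by positivity)
  -- summability over the sigma type
  have hG : Summable fun q : Σ k : ℕ, (Finset.HasAntidiagonal.antidiagonal k : Finset (ℕ × ℕ)) =>
      |F (Finset.HasAntidiagonal.sigmaAntidiagonalEquivProd q)| := by
    rw [summable_sigma_of_nonneg (fun q => abs_nonneg _)]
    constructor
    · intro k; exact (hasSum_fintype _).summable
    · have hmaj : Summable fun k : ℕ => 2 * (M + 1) * (((k : ℝ) + 1) * |x k| * c ^ k) :=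
        (growth_aux x hx hc0).mul_left _
      refine Summable.of_nonneg_of_le (fun k => tsum_nonneg fun p => abs_nonneg _)
        (fun k => ?_) hmaj
      rw [tsum_fintype]
      have step : ∀ p ∈ Finset.HasAntidiagonal.antidiagonal k,
          |F p| ≤ 2 * (M + 1) * |x k| * c ^ k := by
        intro p hp
        have hpk : p.1 + p.2 = k := Finset.HasAntidiagonal.mem_antidiagonal.mp hp
        have := boundF p.1 p.2
        rw [hpk] at this
        simpa using this
      calc (∑ p : (Finset.HasAntidiagonal.antidiagonal k : Finset (ℕ × ℕ)),
            |F (Finset.HasAntidiagonal.sigmaAntidiagonalEquivProd ⟨k, p⟩)|)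
          = ∑ p ∈ Finset.HasAntidiagonal.antidiagonal k, |F p| :=
            Finset.sum_coe_sort (Finset.HasAntidiagonal.antidiagonal k) (fun p => |F p|)
        _ ≤ ∑ _p ∈ Finset.HasAntidiagonal.antidiagonal k, 2 * (M + 1) * |x k| * c ^ k :=
            Finset.sum_le_sum step
        _ = ((k : ℝ) + 1) * (2 * (M + 1) * |x k| * c ^ k) := by
            rw [Finset.sum_const, Finset.Nat.card_antidiagonal, nsmul_eq_mul]
            push_cast
            ring
        _ = 2 * (M + 1) * (((k : ℝ) + 1) * |x k| * c ^ k) := by ring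
  have hFabs : Summable fun p : ℕ × ℕ => |F p| :=
    (Equiv.summable_iff Finset.HasAntidiagonal.sigmaAntidiagonalEquivProd).mp hG
  have hF : Summable F := hFabs.of_abs
  -- Part 2
  have hfib : ∀ n : ℕ, Summable fun m : ℕ => |F (n, m)| := fun n => hFabs.prod_factor n
  have hsums : Summable fun n : ℕ => ∑' m : ℕ, |F (n, m)| :=
    ((summable_prod_of_nonneg (fun p => abs_nonneg _)).mp hFabs).2
  have hyF : ∀ n : ℕ, y n * (v ^ (n + 1) - u ^ (n + 1)) / ((n : ℝ) + 1) = ∑' m : ℕ, F (n, m) := by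
    intro n
    rw [hy n, mul_div_assoc, ← tsum_mul_right]
  have p2 : Summable fun n : ℕ => |y n * (v ^ (n + 1) - u ^ (n + 1)) / ((n : ℝ) + 1)| := by
    refine Summable.of_nonneg_of_le (fun n => abs_nonneg _) (fun n => ?_) hsums
    rw [hyF n]
    have := norm_tsum_le_tsum_norm (f := fun m : ℕ => F (n, m))
      (by simpa [Real.norm_eq_abs] using hfib n)
    simpa [Real.norm_eq_abs] using this
  -- Part 3
  have p3 : Summable fun n : ℕ =>
      |x n * ((v + t) ^ (n + 1) - (u + t) ^ (n + 1)) / ((n : ℝ) + 1)| := by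
    set d : ℝ := max |u + t| |v + t| with hddef
    have hd0 : (0 : ℝ) ≤ d := le_trans (abs_nonneg _) (le_max_left _ _)
    have hmaj : Summable fun n : ℕ => 2 * (d + 1) * (((n : ℝ) + 1) * |x n| * (d + 1) ^ n) :=
      (growth_aux x hx (by positivity)).mul_left _
    refine Summable.of_nonneg_of_le (fun n => abs_nonneg _) (fun n => ?_) hmaj
    have h1 : |(v + t) ^ (n + 1) - (u + t) ^ (n + 1)| / ((n : ℝ) + 1)
        ≤ 2 * (d + 1) * (d + 1) ^ n := by
      have := pow_sub_abs_bound (v + t) (u + t) n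
      simpa [hddef, max_comm |v + t| |u + t|] using this
    have habs : |x n * ((v + t) ^ (n + 1) - (u + t) ^ (n + 1)) / ((n : ℝ) + 1)|
        = |x n| * (|(v + t) ^ (n + 1) - (u + t) ^ (n + 1)| / ((n : ℝ) + 1)) := by
      have hn1 : (0 : ℝ) < (n : ℝ) + 1 := by positivity
      rw [abs_div, abs_mul, abs_of_pos hn1, mul_div_assoc]
    rw [habs]
    have h2 : |x n| * (|(v + t) ^ (n + 1) - (u + t) ^ (n + 1)| / ((n : ℝ) + 1))
        ≤ |x n| * (2 * (d + 1) * (d + 1) ^ n) :=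
      mul_le_mul_of_nonneg_left h1 (abs_nonneg _)
    have h3 : (1 : ℝ) ≤ (n : ℝ) + 1 := by
      have : (0 : ℝ) ≤ (n : ℝ) := Nat.cast_nonneg n
      linarith
    calc |x n| * (|(v + t) ^ (n + 1) - (u + t) ^ (n + 1)| / ((n : ℝ) + 1))
        ≤ |x n| * (2 * (d + 1) * (d + 1) ^ n) := h2
      _ = 1 * (2 * (d + 1) * (|x n| * (d + 1) ^ n)) := by ring
      _ ≤ ((n : ℝ) + 1) * (2 * (d + 1) * (|x n| * (d + 1) ^ n)) :=
          mul_le_mul_of_nonneg_right h3 (by positivity)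
      _ = 2 * (d + 1) * (((n : ℝ) + 1) * |x n| * (d + 1) ^ n) := by ring
  -- Part 4
  refine ⟨p1, p2, p3, ?_⟩
  have e := Finset.HasAntidiagonal.sigmaAntidiagonalEquivProd (A := ℕ)
  calc (∑' n : ℕ, y n * (v ^ (n + 1) - u ^ (n + 1)) / ((n : ℝ) + 1))
      = ∑' n : ℕ, ∑' m : ℕ, F (n, m) := tsum_congr hyF
    _ = ∑' p : ℕ × ℕ, F p := (Summable.tsum_prod' hF (fun n => (hfib n).of_abs)).symm
    _ = ∑' q : Σ k : ℕ, (Finset.HasAntidiagonal.antidiagonal k : Finset (ℕ × ℕ)),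
          F (Finset.HasAntidiagonal.sigmaAntidiagonalEquivProd q) :=
        (Finset.HasAntidiagonal.sigmaAntidiagonalEquivProd.tsum_eq F).symm
    _ = ∑' k : ℕ, ∑' p : (Finset.HasAntidiagonal.antidiagonal k : Finset (ℕ × ℕ)),
          F (Finset.HasAntidiagonal.sigmaAntidiagonalEquivProd ⟨k, p⟩) :=
        Summable.tsum_sigma' (fun k => (hasSum_fintype _).summable)
          ((Equiv.summable_iff Finset.HasAntidiagonal.sigmaAntidiagonalEquivProd).mpr hF)
    _ = ∑' k : ℕ, ∑ p ∈ Finset.HasAntidiagonal.antidiagonal k, F p := by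
        refine tsum_congr fun k => ?_
        rw [tsum_fintype]
        exact Finset.sum_coe_sort (Finset.HasAntidiagonal.antidiagonal k) F
    _ = ∑' k : ℕ, x k * ((v + t) ^ (k + 1) - (u + t) ^ (k + 1)) / ((k : ℝ) + 1) :=
        tsum_congr fun k => antidiag_sum x u v t k
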